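/- Let n ≥ 4 and let λ₁, …, λₙ be real numbers with λ₁ + ⋯ + λₙ = 0, not all zero. Writing pₖ = σₖ(λ)/C(n,k), if p₃² + 4p₂³ = 0 then there is a nonzero real number c such that, after reordering, λ₁ = ⋯ = λ_{n−1} = c and λₙ = (1 − n)c; consequently pₖ = (1 − k)·cᵏ for every positive integer k ≤ n, and in particular p₄ + 3p₂² = 0. -/

import Mathlib

open Finset

set_option linter.unusedSectionVars false

variable {ι : Type*} [DecidableEq ι]

private lemma esum_insert {a : ι} {s : Finset ι} (h : a ∉ s) (f : ι → ℝ) (k : ℕ) :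
    ∑ t ∈ (insert a s).powersetCard (k+1), ∏ i ∈ t, f i =
    (∑ t ∈ s.powersetCard (k+1), ∏ i ∈ t, f i) +
      f a * ∑ t ∈ s.powersetCard k, ∏ i ∈ t, f i := by
  rw [Finset.powersetCard_succ_insert h, Finset.sum_union, Finset.sum_image, Finset.mul_sum]
  · congr 1
    refine Finset.sum_congr rfl fun t ht => ?_
    have hat : a ∉ t := fun hc => h ((Finset.mem_powersetCard.1 ht).1 hc)
    rw [Finset.prod_insert hat]
  · intro t ht u hu hins
    have hat : a ∉ t := fun hc => h ((Finset.mem_powersetCard.1 ht).1 hc)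
    have hau : a ∉ u := fun hc => h ((Finset.mem_powersetCard.1 hu).1 hc)
    have := congrArg (Finset.erase · a) hins
    simpa [Finset.erase_insert hat, Finset.erase_insert hau] using this
  · rw [Finset.disjoint_right]
    intro t ht hts
    obtain ⟨u, hu, rfl⟩ := Finset.mem_image.1 ht
    exact h ((Finset.mem_powersetCard.1 hts).1 (Finset.mem_insert_self a u))

private lemma esum_one (s : Finset ι) (f : ι → ℝ) :
    ∑ t ∈ s.powersetCard 1, ∏ i ∈ t, f i = ∑ i ∈ s, f i := by
  rw [Finset.powersetCard_one, Finset.sum_map]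
  simp

private lemma esum_two_three (s : Finset ι) (f : ι → ℝ) :
    (2 * ∑ t ∈ s.powersetCard 2, ∏ i ∈ t, f i =
      (∑ i ∈ s, f i)^2 - ∑ i ∈ s, f i^2) ∧
    (6 * ∑ t ∈ s.powersetCard 3, ∏ i ∈ t, f i =
      (∑ i ∈ s, f i)^3 - 3 * (∑ i ∈ s, f i) * (∑ i ∈ s, f i^2) + 2 * ∑ i ∈ s, f i^3) := by
  induction s using Finset.induction with
  | empty =>
    constructor <;>
      rw [Finset.powersetCard_eq_empty.2 (by norm_num), Finset.sum_empty] <;> simp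
  | insert _ _ ha ih =>
    rename_i a s
    obtain ⟨ih2, ih3⟩ := ih
    have h2 := esum_insert ha f 1
    have h3 := esum_insert ha f 2
    have h1 := esum_one s f
    rw [Finset.sum_insert ha, Finset.sum_insert ha, Finset.sum_insert ha]
    norm_num at h2 h3
    constructor
    · rw [h2, h1]; linear_combination ih2
    · rw [h3]; linear_combination ih3 + 3 * f a * ih2


/-- The `k`-th elementary symmetric polynomial of `lam 0, …, lam (n-1)`. -/
noncomputable def esymm {n : ℕ} (k : ℕ) (lam : Fin n → ℝ) : ℝ :=
  ∑ s ∈ (Finset.univ : Finset (Fin n)).powersetCard k, ∏ i ∈ s, lam i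

/-- The normalized elementary symmetric function `p k = σ k / C(n,k)`. -/
noncomputable def p {n : ℕ} (k : ℕ) (lam : Fin n → ℝ) : ℝ :=
  esymm k lam / (n.choose k)

private lemma esymm_two {n : ℕ} (lam : Fin n → ℝ) (hsum : ∑ i, lam i = 0) :
    2 * esymm 2 lam = -∑ i, lam i ^ 2 := by
  have h := (esum_two_three (univ : Finset (Fin n)) lam).1
  rw [hsum] at h
  rw [esymm]; linarith [h]

private lemma esymm_three {n : ℕ} (lam : Fin n → ℝ) (hsum : ∑ i, lam i = 0) :
    3 * esymm 3 lam = ∑ i, lam i ^ 3 := by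
  have h := (esum_two_three (univ : Finset (Fin n)) lam).2
  rw [hsum] at h
  rw [esymm]; linarith [h]

private lemma choose_two_cast (n : ℕ) (hn : 1 ≤ n) :
    ((n.choose 2 : ℕ) : ℝ) * 2 = n * ((n:ℝ) - 1) := by
  rw [Nat.cast_choose_two]
  field_simp

private lemma choose_three_cast (n : ℕ) (hn : 2 ≤ n) :
    ((n.choose 3 : ℕ) : ℝ) * 6 = n * ((n:ℝ) - 1) * ((n:ℝ) - 2) := by
  induction n with
  | zero => omega
  | succ m ih =>
    rcases Nat.lt_or_ge m 2 with hm | hm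
    · interval_cases m
      · omega
      · norm_num
    · have h2 := choose_two_cast m (by omega)
      have : (m+1).choose 3 = m.choose 2 + m.choose 3 := Nat.choose_succ_succ m 2
      rw [this]
      push_cast
      have := ih hm
      have hm' : (2:ℝ) ≤ (m:ℝ) := by exact_mod_cast hm
      nlinarith [this, h2]

set_option maxHeartbeats 1000000 in
private lemma structure_of_pos {n : ℕ} (hn : 4 ≤ n) (lam : Fin n → ℝ)
    (hsum : ∑ i, lam i = 0) (hne : lam ≠ 0)
    (hT : 0 < ∑ i, lam i ^ 3)
    (hkey : (n:ℝ) * ((n:ℝ) - 1) * (∑ i, lam i ^ 3)^2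
      = ((n:ℝ) - 2)^2 * (∑ i, lam i ^ 2)^3) :
    ∃ c : ℝ, c ≠ 0 ∧ ∃ j : Fin n, lam j = (1 - (n : ℝ)) * c ∧ ∀ i, i ≠ j → lam i = c := by
  set S := ∑ i, lam i ^ 2 with hS_def
  set T := ∑ i, lam i ^ 3 with hT_def
  have hn4 : (4:ℝ) ≤ (n:ℝ) := by exact_mod_cast hn
  have hS : 0 < S := by
    rcases (Finset.sum_nonneg (fun i _ => sq_nonneg (lam i))).lt_or_eq with h | h
    · exact h
    · exfalso; apply hne; funext i
      have := (Finset.sum_eq_zero_iff_of_nonneg (fun i _ => sq_nonneg (lam i))).1 h.symm i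
        (Finset.mem_univ i)
      exact pow_eq_zero_iff (two_ne_zero) |>.1 this
  -- the maximum
  obtain ⟨i₀, -, hmax⟩ := Finset.exists_max_image (Finset.univ : Finset (Fin n)) lam
    ⟨⟨0, by omega⟩, Finset.mem_univ _⟩
  set s := lam i₀ with hs_def
  have hmax' : ∀ i, lam i ≤ s := fun i => hmax i (Finset.mem_univ i)
  have hs : 0 < s := by
    by_contra h
    push_neg at h
    apply hne; funext i
    have := (Finset.sum_eq_zero_iff_of_nonpos
      (fun i _ => le_trans (hmax' i) h)).1 hsum i (Finset.mem_univ i)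
    exact this
  -- T ≤ s * S
  have hTsS : T ≤ s * S := by
    rw [hT_def, hS_def, Finset.mul_sum]
    refine Finset.sum_le_sum fun i _ => ?_
    nlinarith [hmax' i, sq_nonneg (lam i)]
  -- step 7 : S < n*(n-1)*s^2
  have hBig : S < (n:ℝ) * ((n:ℝ)-1) * s^2 := by
    by_contra h
    push_neg at h
    have h1 : T^2 ≤ s^2 * S^2 := by nlinarith [hT, hTsS]
    have hnn : (0:ℝ) < (n:ℝ)*((n:ℝ)-1) := by nlinarith
    have k1 : (n:ℝ)*((n:ℝ)-1)*T^2 ≤ (n:ℝ)*((n:ℝ)-1)*(s^2*S^2) :=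
      mul_le_mul_of_nonneg_left h1 hnn.le
    have k2 : (n:ℝ)*((n:ℝ)-1)*(s^2*S^2) ≤ S*S^2 := by nlinarith [h, sq_nonneg S]
    have h4 : (4:ℝ) ≤ ((n:ℝ)-2)^2 := by nlinarith
    have hS3 : (0:ℝ) < S^3 := by positivity
    nlinarith [k1, k2, hkey, hS3, mul_le_mul_of_nonneg_right h4 hS3.le]
  -- sums over the erased set
  have hins : Finset.univ = insert i₀ (Finset.univ.erase i₀) :=
    (Finset.insert_erase (Finset.mem_univ i₀)).symm
  have hsum_erase : ∑ i ∈ Finset.univ.erase i₀, lam i = -s := by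
    have := hsum
    rw [hins, Finset.sum_insert (Finset.notMem_erase _ _)] at this
    linarith
  have hsq_erase : ∑ i ∈ Finset.univ.erase i₀, lam i ^ 2 = S - s^2 := by
    have : S = ∑ i, lam i ^ 2 := hS_def
    rw [hins, Finset.sum_insert (Finset.notMem_erase _ _)] at this
    linarith
  have hcard_erase : ((Finset.univ.erase i₀).card : ℝ) = (n:ℝ) - 1 := by
    rw [Finset.card_erase_of_mem (Finset.mem_univ _)]
    simp only [Finset.card_univ, Fintype.card_fin]
    have : 1 ≤ n := by omega
    push_cast [Nat.cast_sub this]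
    ring
  have hn1 : (0:ℝ) < (n:ℝ) - 1 := by linarith
  set t0 : ℝ := s / ((n:ℝ) - 1) with ht0_def
  -- E and its value
  have hE_val : ∑ i ∈ Finset.univ.erase i₀, (lam i + t0)^2
      = S - (n:ℝ) * s^2 / ((n:ℝ) - 1) := by
    have expand : ∑ i ∈ Finset.univ.erase i₀, (lam i + t0)^2
        = ∑ i ∈ Finset.univ.erase i₀, (lam i ^ 2 + (2 * t0 * lam i + t0^2)) :=
      Finset.sum_congr rfl fun i _ => by ring
    rw [expand, Finset.sum_add_distrib, Finset.sum_add_distrib, ← Finset.mul_sum,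
      Finset.sum_const, nsmul_eq_mul, hsum_erase, hsq_erase, hcard_erase, ht0_def]
    field_simp
    ring
  have hE_nonneg : 0 ≤ ∑ i ∈ Finset.univ.erase i₀, (lam i + t0)^2 :=
    Finset.sum_nonneg fun i _ => sq_nonneg _
  have hLe : (n:ℝ) * s^2 ≤ ((n:ℝ) - 1) * S := by
    rw [hE_val] at hE_nonneg
    have h' : (n:ℝ)*s^2/((n:ℝ)-1) ≤ S := by linarith
    have := (div_le_iff₀ hn1).1 h'
    linarith
  -- step 5 : the t-parametrized bound
  have hns : (0:ℝ) < (n:ℝ) * s := by positivity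
  have ht0' : t0 * ((n:ℝ) * s) = S → True := fun _ => trivial
  set t : ℝ := S / ((n:ℝ) * s) with ht_def
  have ht : t * ((n:ℝ) * s) = S := by
    rw [ht_def]; field_simp
  have hF_nonneg : 0 ≤ ∑ i, (lam i + t)^2 * (s - lam i) :=
    Finset.sum_nonneg fun i _ => mul_nonneg (sq_nonneg _) (by linarith [hmax' i])
  have hF_val : ∑ i, (lam i + t)^2 * (s - lam i)
      = -T + (s - 2*t) * S + (n:ℝ) * t^2 * s := by
    have expand : ∑ i, (lam i + t)^2 * (s - lam i)
        = ∑ i, (-(lam i ^ 3) + ((s - 2*t) * lam i ^ 2 + ((2*t*s - t^2) * lam i + t^2 * s))) :=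
      Finset.sum_congr rfl fun i _ => by ring
    rw [expand, Finset.sum_add_distrib, Finset.sum_add_distrib, Finset.sum_add_distrib,
      Finset.sum_neg_distrib, ← Finset.mul_sum, ← Finset.mul_sum,
      Finset.sum_const, nsmul_eq_mul, hsum, ← hT_def, ← hS_def]
    simp only [Finset.card_univ, Fintype.card_fin]
    ring
  have hineq : T ≤ s * S - 2*t*S + (n:ℝ) * s * t^2 := by
    rw [hF_val] at hF_nonneg
    linarith only [hF_nonneg]
  have hB : T * ((n:ℝ) * s) ≤ (n:ℝ) * s^2 * S - S^2 := by
    have h2 := mul_le_mul_of_nonneg_left hineq hns.le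
    calc T * ((n:ℝ)*s) = ((n:ℝ)*s) * T := by ring
      _ ≤ ((n:ℝ)*s) * (s * S - 2*t*S + (n:ℝ)*s*t^2) := h2
      _ = (n:ℝ)*s^2*S - 2*S*(t*((n:ℝ)*s)) + (t*((n:ℝ)*s))^2 := by ring
      _ = (n:ℝ)*s^2*S - 2*S*S + S^2 := by rw [ht]
      _ = (n:ℝ)*s^2*S - S^2 := by ring
  -- step 8 : conclude n*s^2 = (n-1)*S
  have hGe : ((n:ℝ) - 1) * S ≤ (n:ℝ) * s^2 := by
    by_contra h
    push_neg at h
    have hq : (T * ((n:ℝ)*s))^2 ≤ ((n:ℝ)*s^2*S - S^2)^2 :=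
      pow_le_pow_left₀ (mul_pos hT hns).le hB 2
    have hq2 : (n:ℝ)*s^2*(((n:ℝ)-2)^2*S^3) ≤ ((n:ℝ)-1)*((n:ℝ)*s^2*S - S^2)^2 := by
      calc (n:ℝ)*s^2*(((n:ℝ)-2)^2*S^3) = (n:ℝ)*s^2*((n:ℝ)*((n:ℝ)-1)*T^2) := by rw [← hkey]
        _ = ((n:ℝ)-1)*(T*((n:ℝ)*s))^2 := by ring
        _ ≤ ((n:ℝ)-1)*((n:ℝ)*s^2*S - S^2)^2 := mul_le_mul_of_nonneg_left hq hn1.le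
    have fact1 : (0:ℝ) < ((n:ℝ)-1)*((n:ℝ)*s^2) - S := by nlinarith [hBig]
    have fact2 : (0:ℝ) < ((n:ℝ)-1)*S - (n:ℝ)*s^2 := by linarith
    nlinarith [hq2, mul_pos (mul_pos fact1 fact2) (mul_pos hS hS), hS]
  have hEq : (n:ℝ) * s^2 = ((n:ℝ)-1) * S := le_antisymm hLe hGe
  -- E = 0, so all the other entries are equal
  have hE_zero : ∑ i ∈ Finset.univ.erase i₀, (lam i + t0)^2 = 0 := by
    rw [hE_val]
    field_simp
    linarith [hEq]
  have hall : ∀ i, i ≠ i₀ → lam i = -t0 := by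
    intro i hi
    have hmem : i ∈ Finset.univ.erase i₀ := Finset.mem_erase.2 ⟨hi, Finset.mem_univ _⟩
    have := (Finset.sum_eq_zero_iff_of_nonneg (fun i _ => sq_nonneg (lam i + t0))).1
      hE_zero i hmem
    have := pow_eq_zero_iff (two_ne_zero) |>.1 this
    linarith
  refine ⟨-t0, ?_, i₀, ?_, hall⟩
  · rw [ht0_def]
    intro h
    have : s / ((n:ℝ)-1) = 0 := by linarith
    rw [div_eq_zero_iff] at this
    rcases this with h' | h' <;> nlinarith
  · rw [ht0_def, ← hs_def]
    field_simp
    ring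

private lemma p_structure {n : ℕ} (hn : 1 ≤ n) (lam : Fin n → ℝ) (c : ℝ) (j : Fin n)
    (hj : lam j = (1 - (n:ℝ)) * c) (hother : ∀ i, i ≠ j → lam i = c)
    {k : ℕ} (hk1 : 1 ≤ k) (hkn : k ≤ n) :
    p k lam = (1 - (k:ℝ)) * c ^ k := by
  classical
  set P := (Finset.univ : Finset (Fin n)).powersetCard k with hP_def
  have hsplit := Finset.sum_filter_add_sum_filter_not P (fun t => j ∈ t)
    (fun t => ∏ i ∈ t, lam i)
  have hfilter_not : P.filter (fun t => j ∉ t) = (Finset.univ.erase j).powersetCard k := by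
    ext t
    simp only [Finset.mem_filter, Finset.mem_powersetCard, Finset.subset_erase, hP_def]
    tauto
  have hcard_erase : (Finset.univ.erase j).card = n - 1 := by
    rw [Finset.card_erase_of_mem (Finset.mem_univ _)]
    simp
  have hsum_not : ∑ t ∈ P.filter (fun t => j ∉ t), ∏ i ∈ t, lam i
      = ((n-1).choose k : ℝ) * c ^ k := by
    rw [hfilter_not]
    rw [Finset.sum_congr rfl (fun t ht => ?_), Finset.sum_const, nsmul_eq_mul,
      Finset.card_powersetCard, hcard_erase]
    · rw [Finset.mem_powersetCard] at ht
      have : ∀ i ∈ t, lam i = c := fun i hi =>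
        hother i (Finset.mem_erase.1 (ht.1 hi)).1
      rw [Finset.prod_congr rfl this, Finset.prod_const, ht.2]
  have hsum_mem : ∑ t ∈ P.filter (fun t => j ∈ t), ∏ i ∈ t, lam i
      = ((n-1).choose (k-1) : ℝ) * ((1 - (n:ℝ)) * c ^ k) := by
    have hprod : ∀ t ∈ P.filter (fun t => j ∈ t), ∏ i ∈ t, lam i
        = (1 - (n:ℝ)) * c ^ k := by
      intro t ht
      rw [Finset.mem_filter] at ht
      obtain ⟨htP, htj⟩ := ht
      rw [hP_def, Finset.mem_powersetCard] at htP
      rw [← Finset.mul_prod_erase t lam htj, hj]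
      have : ∀ i ∈ t.erase j, lam i = c := fun i hi =>
        hother i (Finset.mem_erase.1 hi).1
      rw [Finset.prod_congr rfl this, Finset.prod_const, Finset.card_erase_of_mem htj, htP.2]
      calc (1 - (n:ℝ)) * c * c ^ (k-1) = (1 - (n:ℝ)) * c ^ (k - 1 + 1) := by ring
        _ = (1 - (n:ℝ)) * c ^ k := by rw [Nat.sub_add_cancel hk1]
    rw [Finset.sum_congr rfl hprod, Finset.sum_const, nsmul_eq_mul]
    congr 1
    have hcards : (P.filter (fun t => j ∈ t)).card + (P.filter (fun t => j ∉ t)).card = P.card :=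
      Finset.card_filter_add_card_filter_not _
    have hPcard : P.card = n.choose k := by
      rw [hP_def, Finset.card_powersetCard, Finset.card_univ, Fintype.card_fin]
    have hNotcard : (P.filter (fun t => j ∉ t)).card = (n-1).choose k := by
      rw [hfilter_not, Finset.card_powersetCard, hcard_erase]
    have hpascal : n.choose k = (n-1).choose (k-1) + (n-1).choose k := by
      have h1 : n = (n-1) + 1 := by omega
      have h2 : k = (k-1) + 1 := by omega
      rw [h1, h2]
      rw [Nat.choose_succ_succ]
      congr 1 <;> rw [← h2]
    have : (P.filter (fun t => j ∈ t)).card = (n-1).choose (k-1) := by omega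
    rw [this]
  have hesymm : esymm k lam
      = ((n-1).choose (k-1) : ℝ) * ((1 - (n:ℝ)) * c ^ k) + ((n-1).choose k : ℝ) * c ^ k := by
    rw [esymm, ← hP_def, ← hsplit, hsum_mem, hsum_not]
  -- the binomial identities, cast to ℝ
  have idA : (k:ℝ) * (n.choose k : ℝ) = (n:ℝ) * ((n-1).choose (k-1) : ℝ) := by
    have h := Nat.add_one_mul_choose_eq (n-1) (k-1)
    rw [show n-1+1 = n by omega, show k-1+1 = k by omega] at h
    have h' : (n:ℝ) * ((n-1).choose (k-1) : ℝ) = (n.choose k : ℝ) * (k:ℝ) := by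
      exact_mod_cast h
    linarith [h']
  have idB : (n.choose k : ℝ) = ((n-1).choose (k-1) : ℝ) + ((n-1).choose k : ℝ) := by
    have h1 : n = (n-1) + 1 := by omega
    have h2 : k = (k-1) + 1 := by omega
    have : n.choose k = (n-1).choose (k-1) + (n-1).choose k := by
      rw [h1, h2, Nat.choose_succ_succ]
      congr 1 <;> rw [← h2]
    exact_mod_cast this
  have hCpos : (0:ℝ) < (n.choose k : ℝ) := by
    exact_mod_cast Nat.choose_pos hkn
  rw [p, hesymm]
  rw [div_eq_iff hCpos.ne']
  linear_combination (c^k) * idA - (c^k) * idB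

theorem equality_case_structure (n : ℕ) (hn : 4 ≤ n) (lam : Fin n → ℝ)
    (hsum : ∑ i, lam i = 0) (hne : lam ≠ 0)
    (heq : p 3 lam ^ 2 + 4 * p 2 lam ^ 3 = 0) :
    ∃ c : ℝ, c ≠ 0 ∧
      (∃ j : Fin n, lam j = (1 - (n : ℝ)) * c ∧ ∀ i, i ≠ j → lam i = c) ∧
      (∀ k : ℕ, 1 ≤ k → k ≤ n → p k lam = (1 - (k : ℝ)) * c ^ k) ∧
      p 4 lam + 3 * p 2 lam ^ 2 = 0 := by
  have hn4 : (4:ℝ) ≤ (n:ℝ) := by exact_mod_cast hn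
  set S := ∑ i, lam i ^ 2 with hS_def
  set T := ∑ i, lam i ^ 3 with hT_def
  have hC2 : ((n.choose 2 : ℕ):ℝ) * 2 = (n:ℝ)*((n:ℝ)-1) := choose_two_cast n (by omega)
  have hC3 : ((n.choose 3 : ℕ):ℝ) * 6 = (n:ℝ)*((n:ℝ)-1)*((n:ℝ)-2) := choose_three_cast n (by omega)
  have he2 := esymm_two lam hsum
  have he3 := esymm_three lam hsum
  have hC2pos : (0:ℝ) < ((n.choose 2 : ℕ):ℝ) := by
    exact_mod_cast Nat.choose_pos (show 2 ≤ n by omega)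
  have hC3pos : (0:ℝ) < ((n.choose 3 : ℕ):ℝ) := by
    exact_mod_cast Nat.choose_pos (show 3 ≤ n by omega)
  have hp2C : p 2 lam * ((n.choose 2 : ℕ):ℝ) = esymm 2 lam := by
    rw [p]; field_simp
  have hp3C : p 3 lam * ((n.choose 3 : ℕ):ℝ) = esymm 3 lam := by
    rw [p]; field_simp
  have hp2 : p 2 lam * ((n:ℝ)*((n:ℝ)-1)) = -S := by
    calc p 2 lam * ((n:ℝ)*((n:ℝ)-1)) = (p 2 lam * ((n.choose 2 : ℕ):ℝ)) * 2 := by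
          rw [← hC2]; ring
      _ = 2 * esymm 2 lam := by rw [hp2C]; ring
      _ = -S := by rw [he2]
  have hp3 : p 3 lam * ((n:ℝ)*((n:ℝ)-1)*((n:ℝ)-2)) = 2 * T := by
    calc p 3 lam * ((n:ℝ)*((n:ℝ)-1)*((n:ℝ)-2)) = (p 3 lam * ((n.choose 3 : ℕ):ℝ)) * 6 := by
          rw [← hC3]; ring
      _ = 2 * (3 * esymm 3 lam) := by rw [hp3C]; ring
      _ = 2 * T := by rw [he3]
  have hS : 0 < S := by
    rcases (Finset.sum_nonneg (fun i _ => sq_nonneg (lam i))).lt_or_eq with h | h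
    · exact h
    · exfalso; apply hne; funext i
      have := (Finset.sum_eq_zero_iff_of_nonneg (fun i _ => sq_nonneg (lam i))).1 h.symm i
        (Finset.mem_univ i)
      exact pow_eq_zero_iff (two_ne_zero) |>.1 this
  have hA : (0:ℝ) < (n:ℝ)*((n:ℝ)-1) := by nlinarith
  have hB0 : (0:ℝ) < (n:ℝ)-2 := by linarith
  have hkey : (n:ℝ)*((n:ℝ)-1) * T^2 = ((n:ℝ)-2)^2 * S^3 := by
    have hSeq : S = -(p 2 lam) * ((n:ℝ)*((n:ℝ)-1)) := by linarith [hp2]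
    have hTeq : T = p 3 lam * ((n:ℝ)*((n:ℝ)-1)*((n:ℝ)-2)) / 2 := by linarith [hp3]
    rw [hSeq, hTeq]
    field_simp
    linear_combination (((n:ℝ)-1)^3) * heq
  have hTne : T ≠ 0 := by
    intro h
    rw [h] at hkey
    have : (0:ℝ) < ((n:ℝ)-2)^2 * S^3 := by positivity
    simp at hkey
    rcases hkey with h' | h' <;> [linarith; linarith]
  have hstruct : ∃ c : ℝ, c ≠ 0 ∧ ∃ j : Fin n,
      lam j = (1 - (n:ℝ))*c ∧ ∀ i, i ≠ j → lam i = c := by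
    rcases hTne.lt_or_gt with hTneg | hTpos
    · have e1 : ∑ i, (-lam) i = 0 := by
        simp only [Pi.neg_apply]
        rw [Finset.sum_neg_distrib, hsum, neg_zero]
      have e3 : ∑ i, (-lam) i ^ 3 = -T := by
        simp only [Pi.neg_apply, hT_def]
        rw [← Finset.sum_neg_distrib]
        exact Finset.sum_congr rfl fun i _ => by ring
      have e2 : ∑ i, (-lam) i ^ 2 = S := by
        simp only [Pi.neg_apply, hS_def]
        exact Finset.sum_congr rfl fun i _ => by ring
      have hne' : (-lam) ≠ 0 := by
        intro h; apply hne; funext i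
        have := congrFun h i; simpa using this
      obtain ⟨c, hc, j, hj, hother⟩ := structure_of_pos hn (-lam) e1 hne'
        (by rw [e3]; linarith)
        (by rw [e3, e2]; linear_combination hkey)
      refine ⟨-c, neg_ne_zero.2 hc, j, ?_, fun i hi => ?_⟩
      · have h1 : -lam j = (1-(n:ℝ))*c := hj
        linear_combination -h1
      · have h1 : -lam i = c := hother i hi
        linear_combination -h1
    · exact structure_of_pos hn lam hsum hne hTpos hkey
  obtain ⟨c, hc, j, hj, hother⟩ := hstruct
  have hpk : ∀ k : ℕ, 1 ≤ k → k ≤ n → p k lam = (1-(k:ℝ))*c^k :=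
    fun k hk1 hkn => p_structure (by omega) lam c j hj hother hk1 hkn
  refine ⟨c, hc, ⟨j, hj, hother⟩, hpk, ?_⟩
  have h2 := hpk 2 (by omega) (by omega)
  have h4 := hpk 4 (by omega) hn
  rw [h2, h4]
  push_cast
  ring
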